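/- The spinor ψ^∞ = (ψ₁^∞, ψ₂^∞) with ψ₁^∞(x) = √ν tanh(κx)/(1-ν tanh²(κx)) and ψ₂^∞(x) = -(ν/(1-ν))·(1-tanh²(κx))/(1-ν tanh²(κx)) satisfies the pointwise ODE system ψ₂' = (m - M)ψ₁ and ψ₁' = -(m + M)ψ₂ with M := m - 2g, i.e. it is a resonance state of A₁ = iσ₂∂ₓ + mσ₃ - 2gσ₃ at energy m. -/

import Mathlib

open Real

lemma tanh_sq_lt_one (x : ℝ) : Real.tanh x ^ 2 < 1 := by
  rw [Real.tanh_eq_sinh_div_cosh, div_pow, div_lt_one (by positivity)]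
  nlinarith [Real.cosh_sq x]

lemma hasDerivAt_tanh' (x : ℝ) : HasDerivAt Real.tanh (1 - Real.tanh x ^ 2) x := by
  have h := (Real.hasDerivAt_sinh x).div (Real.hasDerivAt_cosh x) (Real.cosh_pos x).ne'
  have hfun : (fun y => Real.sinh y / Real.cosh y) = Real.tanh := by
    funext y; rw [Real.tanh_eq_sinh_div_cosh]
  rw [show (Real.sinh / Real.cosh) = Real.tanh from hfun] at h
  refine h.congr_deriv ?_
  rw [Real.tanh_eq_sinh_div_cosh]
  have hc := (Real.cosh_pos x).ne'
  have hs := Real.cosh_sq_sub_sinh_sq x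
  field_simp

lemma aux_eq1 (m ω κ ν t sν : ℝ)
    (hsν : sν ^ 2 = ν) (hkey : sν * κ = m - ω)
    (hν1 : ν < 1) (hD : (0:ℝ) < 1 - ν * t ^ 2) :
    (m - (m - 2 * ((m - ω) * (1 - t ^ 2) / (1 - ν * t ^ 2)))) * (sν * t / (1 - ν * t ^ 2)) =
    (-(ν / (1 - ν)) * -(2 * t * (κ * (1 - t ^ 2))) * (1 - ν * t ^ 2) -
        -(ν / (1 - ν)) * (1 - t ^ 2) * -(ν * (2 * t * (κ * (1 - t ^ 2))))) /
      (1 - ν * t ^ 2) ^ 2 := by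
  have h1ν : (1:ℝ) - ν ≠ 0 := by linarith
  have hD' : 1 - t^2*ν ≠ 0 := by nlinarith
  field_simp
  linear_combination (-2*t*(1-t^2)*(1-ν)*sν) * hkey +
    (2*t*(1-t^2)*(1-ν)*κ) * hsν

lemma aux_eq2 (m ω κ ν t sν : ℝ)
    (hkey : sν * κ = m - ω) (hνid : ν * (m + ω) = m - ω)
    (hν1 : ν < 1) (hD : (0:ℝ) < 1 - ν * t ^ 2) :
    -(m + (m - 2 * ((m - ω) * (1 - t ^ 2) / (1 - ν * t ^ 2)))) *
      (-(ν / (1 - ν)) * (1 - t ^ 2) / (1 - ν * t ^ 2)) =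
    (sν * (κ * (1 - t ^ 2)) * (1 - ν * t ^ 2) -
        sν * t * -(ν * (2 * t * (κ * (1 - t ^ 2))))) / (1 - ν * t ^ 2) ^ 2 := by
  have h1ν : (1:ℝ) - ν ≠ 0 := by linarith
  have hD' : 1 - t^2*ν ≠ 0 := by nlinarith
  field_simp
  linear_combination ((1-t^2)*(1-ν*t^2)) * hνid +
    (-(1-t^2)*(1+ν*t^2)*(1-ν)) * hkey

theorem stmt2 (m ω κ ν : ℝ) (hm : 0 < m) (hω1 : 0 < ω) (hω2 : ω < m)
    (hκ : κ = Real.sqrt (m ^ 2 - ω ^ 2)) (hν : ν = (m - ω) / (m + ω))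
    (g ψ1 ψ2 M : ℝ → ℝ)
    (hg : ∀ x, g x = (m - ω) * (1 - Real.tanh (κ * x) ^ 2) / (1 - ν * Real.tanh (κ * x) ^ 2))
    (hψ1 : ∀ x, ψ1 x = Real.sqrt ν * Real.tanh (κ * x) / (1 - ν * Real.tanh (κ * x) ^ 2))
    (hψ2 : ∀ x, ψ2 x = -(ν / (1 - ν)) * (1 - Real.tanh (κ * x) ^ 2) / (1 - ν * Real.tanh (κ * x) ^ 2))
    (hM : ∀ x, M x = m - 2 * g x) :
    ∀ x, HasDerivAt ψ2 ((m - M x) * ψ1 x) x ∧ HasDerivAt ψ1 (-(m + M x) * ψ2 x) x := by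
  have hmω : 0 < m + ω := by linarith
  have hmω' : 0 < m - ω := by linarith
  have hν0 : 0 < ν := by rw [hν]; positivity
  have hν1 : ν < 1 := by rw [hν, div_lt_one hmω]; linarith
  have hsν : Real.sqrt ν ^ 2 = ν := Real.sq_sqrt hν0.le
  have hkey : Real.sqrt ν * κ = m - ω := by
    rw [hκ, ← Real.sqrt_mul hν0.le]
    have : ν * (m ^ 2 - ω ^ 2) = (m - ω) ^ 2 := by
      rw [hν]; field_simp; ring
    rw [this, Real.sqrt_sq hmω'.le]
  have hνid : ν * (m + ω) = m - ω := by rw [hν]; field_simp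
  intro x
  set t : ℝ := Real.tanh (κ * x) with htdef
  have ht2 : t ^ 2 < 1 := _root_.tanh_sq_lt_one _
  have hD : (0:ℝ) < 1 - ν * t ^ 2 := by nlinarith
  have hinner : ∀ y : ℝ, HasDerivAt (fun z => Real.tanh (κ * z))
      (κ * (1 - Real.tanh (κ * y) ^ 2)) y := by
    intro y
    have h1 : HasDerivAt (fun z : ℝ => κ * z) κ y := by
      simpa using (hasDerivAt_id y).const_mul κ
    have := (hasDerivAt_tanh' (κ * y)).comp y h1
    simpa [mul_comm, Function.comp_def] using this
  have hψ1fun : ψ1 = fun y => Real.sqrt ν * Real.tanh (κ * y) / (1 - ν * Real.tanh (κ * y) ^ 2) := by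
    funext y; exact hψ1 y
  have hψ2fun : ψ2 = fun y => -(ν / (1 - ν)) * (1 - Real.tanh (κ * y) ^ 2) / (1 - ν * Real.tanh (κ * y) ^ 2) := by
    funext y; exact hψ2 y
  have hnum1 : HasDerivAt (fun y => Real.sqrt ν * Real.tanh (κ * y))
      (Real.sqrt ν * (κ * (1 - t ^ 2))) x := (hinner x).const_mul _
  have hp : HasDerivAt (fun y => Real.tanh (κ * y) ^ 2)
      (2 * t * (κ * (1 - t ^ 2))) x := by
    simpa [pow_one, Pi.pow_def] using (hinner x).pow 2
  have hden : HasDerivAt (fun y => 1 - ν * Real.tanh (κ * y) ^ 2)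
      (-(ν * (2 * t * (κ * (1 - t ^ 2))))) x := by
    simpa using (hp.const_mul ν).const_sub 1
  have hnum2 : HasDerivAt (fun y => -(ν / (1 - ν)) * (1 - Real.tanh (κ * y) ^ 2))
      (-(ν / (1 - ν)) * (-(2 * t * (κ * (1 - t ^ 2))))) x :=
    (hp.const_sub 1).const_mul _
  have hd1 : HasDerivAt ψ1
      ((Real.sqrt ν * (κ * (1 - t ^ 2)) * (1 - ν * t ^ 2) -
        Real.sqrt ν * t * (-(ν * (2 * t * (κ * (1 - t ^ 2)))))) / (1 - ν * t ^ 2) ^ 2) x := by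
    rw [hψ1fun]
    exact hnum1.div hden hD.ne'
  have hd2 : HasDerivAt ψ2
      ((-(ν / (1 - ν)) * (-(2 * t * (κ * (1 - t ^ 2)))) * (1 - ν * t ^ 2) -
        -(ν / (1 - ν)) * (1 - t ^ 2) * (-(ν * (2 * t * (κ * (1 - t ^ 2)))))) / (1 - ν * t ^ 2) ^ 2) x := by
    rw [hψ2fun]
    exact hnum2.div hden hD.ne'
  constructor
  · have heq : (m - M x) * ψ1 x =
        (-(ν / (1 - ν)) * (-(2 * t * (κ * (1 - t ^ 2)))) * (1 - ν * t ^ 2) -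
          -(ν / (1 - ν)) * (1 - t ^ 2) * (-(ν * (2 * t * (κ * (1 - t ^ 2)))))) / (1 - ν * t ^ 2) ^ 2 := by
      rw [hM x, hg x, hψ1 x, ← htdef]
      exact aux_eq1 m ω κ ν t (Real.sqrt ν) hsν hkey hν1 hD
    rw [heq]; exact hd2
  · have heq : -(m + M x) * ψ2 x =
        (Real.sqrt ν * (κ * (1 - t ^ 2)) * (1 - ν * t ^ 2) -
          Real.sqrt ν * t * (-(ν * (2 * t * (κ * (1 - t ^ 2)))))) / (1 - ν * t ^ 2) ^ 2 := by
      rw [hM x, hg x, hψ2 x, ← htdef]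
      exact aux_eq2 m ω κ ν t (Real.sqrt ν) hkey hνid hν1 hD
    rw [heq]; exact hd1
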